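/- Let E be a vector lattice of real-valued functions on a set X (with pointwise order) in which order convergence implies pointwise convergence, and suppose a sequence (g_n) in E converges uniformly to a function g ∉ E. If the constant functions belong to E, then (g_n) is Buo-Cauchy in E but has no order limit in E. -/

import Mathlib

open Filter

/-- `z` decreases to `0` within the function lattice `S` (pointwise order):
all terms lie in `S`, the sequence is antitone, nonnegative, and `0` is its
greatest lower bound within `S`. -/
def DecToZeroIn {X : Type*} (S : Set (X → ℝ)) (z : ℕ → X → ℝ) : Prop :=
  (∀ m, z m ∈ S) ∧ Antitone z ∧ (∀ m, (0 : X → ℝ) ≤ z m) ∧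
    ∀ w ∈ S, (∀ m, w ≤ z m) → w ≤ 0

/-- Order convergence of `f` to `g` within the function lattice `S`. -/
def OrderConvIn {X : Type*} (S : Set (X → ℝ)) (f : ℕ → X → ℝ) (g : X → ℝ) : Prop :=
  ∃ z : ℕ → X → ℝ, DecToZeroIn S z ∧
    ∀ m : ℕ, ∃ N : ℕ, ∀ n ≥ N, ∀ x, |f n x - g x| ≤ z m x

/-- Bourgain–uo Cauchy within `S`: along every strictly increasing sequence of
indices the differences order-converge to `0` in `S`. -/
def BuoCauchyIn {X : Type*} (S : Set (X → ℝ)) (f : ℕ → X → ℝ) : Prop :=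
  ∀ φ : ℕ → ℕ, StrictMono φ → OrderConvIn S (fun k => f (φ (k + 1)) - f (φ k)) 0

/-- The lattice `c₀` of null real sequences. -/
def memC0 : Set (ℕ → ℝ) := {x | Tendsto x atTop (nhds 0)}

/-- The lattice `ℓ∞(X)` of bounded real functions on `X`. -/
def memLinf {X : Type*} : Set (X → ℝ) := {f | ∃ M : ℝ, ∀ x, |f x| ≤ M}

/-- In a function lattice `S ⊂ ℝ^X` containing the constants, closed under the
vector lattice operations, and in which order convergence implies pointwise
convergence, a sequence converging uniformly to a function outside `S` is
Buo-Cauchy but has no order limit in `S`. -/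
theorem uniform_limit_outside_gives_buoCauchy_without_limit
    {X : Type*} (S : Set (X → ℝ))
    (hconst : ∀ c : ℝ, (fun _ : X => c) ∈ S)
    (hadd : ∀ f ∈ S, ∀ g ∈ S, f + g ∈ S)
    (hneg : ∀ f ∈ S, -f ∈ S)
    (hsup : ∀ f ∈ S, ∀ g ∈ S, f ⊔ g ∈ S)
    (hsmul : ∀ (c : ℝ), ∀ f ∈ S, c • f ∈ S)
    (hpt : ∀ (f : ℕ → X → ℝ), (∀ n, f n ∈ S) → ∀ h ∈ S, OrderConvIn S f h →
      ∀ x, Tendsto (fun n => f n x) atTop (nhds (h x)))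
    (g : ℕ → X → ℝ) (hgS : ∀ n, g n ∈ S)
    (G : X → ℝ) (hG : G ∉ S)
    (hunif : TendstoUniformly g G atTop) :
    BuoCauchyIn S g ∧ ∀ h ∈ S, ¬ OrderConvIn S g h := by
  have hpw : ∀ x, Tendsto (fun n => g n x) atTop (nhds (G x)) := fun x =>
    hunif.tendsto_at x
  constructor
  · intro φ hφ
    refine ⟨fun m _ => 2 / (m + 1), ⟨fun m => hconst _, ?_, ?_, ?_⟩, ?_⟩
    · intro a b hab _x
      have : (a : ℝ) + 1 ≤ b + 1 := by exact_mod_cast Nat.add_le_add_right hab 1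
      exact div_le_div_of_nonneg_left (by norm_num) (by positivity) this
    · intro m x
      positivity
    · intro w _ hw x
      have hlim : Tendsto (fun m : ℕ => 2 / ((m : ℝ) + 1)) atTop (nhds 0) := by
        have h0 : Tendsto (fun n : ℕ => 1 / ((n : ℝ) + 1)) atTop (nhds 0) :=
          tendsto_one_div_add_atTop_nhds_zero_nat
        have h2 := h0.const_mul (2 : ℝ)
        simp only [mul_zero] at h2
        refine h2.congr fun m => ?_
        ring
      exact le_of_tendsto_of_tendsto' tendsto_const_nhds hlim (fun m => hw m x)
    · intro m
      rw [Metric.tendstoUniformly_iff] at hunif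
      obtain ⟨N, hN⟩ := (hunif (1 / (m + 1)) (by positivity)).exists_forall_of_atTop
      refine ⟨N, fun k hk x => ?_⟩
      have h1 : dist (G x) (g (φ (k + 1)) x) < 1 / (m + 1) :=
        hN _ (le_trans (le_trans hk (Nat.le_succ k)) hφ.le_apply) x
      have h2 : dist (G x) (g (φ k) x) < 1 / (m + 1) :=
        hN _ (le_trans hk hφ.le_apply) x
      have := dist_triangle (g (φ (k + 1)) x) (G x) (g (φ k) x)
      rw [dist_comm (g (φ (k + 1)) x) (G x)] at this
      have hle : dist (g (φ (k + 1)) x) (g (φ k) x) < 2 / (m + 1) := by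
        rw [show (2 : ℝ) / (m + 1) = 1 / (m + 1) + 1 / (m + 1) by ring]
        exact lt_of_le_of_lt this (add_lt_add h1 h2)
      simpa [Real.dist_eq] using hle.le
  · intro h hh hconv
    have := hpt g hgS h hh hconv
    apply hG
    have : G = h := by
      funext x
      exact tendsto_nhds_unique (hpw x) (this x)
    rwa [this]
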